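/- Let F be a ℝ^K-valued random vector with S := E(FFᵀ) positive definite and μ := E(F). For fixed ζ ∈ ℝ^K, the infimum over K×K real matrices Γ of E‖ΓF + ζ‖₂² equals ‖ζ‖₂² (1 − μᵀ S⁻¹ μ), attained at Γ whose i-th row Γᵢ satisfies S Γᵢᵀ = −ζᵢ μ. -/

import Mathlib

open Matrix MeasureTheory

private lemma memL2_mul_integrable {Ω : Type*} [MeasurableSpace Ω] {P : Measure Ω}
    {f g : Ω → ℝ} (hf : MemLp f 2 P) (hg : MemLp g 2 P) :
    Integrable (fun ω => f ω * g ω) P := by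
  have h : Integrable (fun ω => ((f ω + g ω) ^ 2 - f ω ^ 2 - g ω ^ 2) / 2) P :=
    (((hf.add hg).integrable_sq.sub hf.integrable_sq).sub hg.integrable_sq).div_const 2
  refine h.congr (Filter.Eventually.of_forall fun ω => ?_)
  ring

/-- Quadratic minimization: for a square-integrable random vector `F` with
`S = E(FFᵀ)` positive definite and `μ = E F`, the infimum over matrices `Γ` of
`E‖ΓF + ζ‖₂²` equals `‖ζ‖₂² (1 − μᵀS⁻¹μ)`, attained at `Γ` with `S Γᵢᵀ = −ζᵢ μ`. -/
theorem stmt2 {K : ℕ} {Ω : Type*} [MeasurableSpace Ω] (P : Measure Ω)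
    [IsProbabilityMeasure P]
    (F : Ω → Fin K → ℝ)
    (hmeas : ∀ i, Measurable fun ω => F ω i)
    (hL2 : ∀ i, MemLp (fun ω => F ω i) 2 P)
    (S : Matrix (Fin K) (Fin K) ℝ) (hS : ∀ i j, S i j = ∫ ω, F ω i * F ω j ∂P)
    (hSpd : S.PosDef)
    (μv : Fin K → ℝ) (hμ : ∀ i, μv i = ∫ ω, F ω i ∂P)
    (ζ : Fin K → ℝ) :
    IsLeast {x : ℝ | ∃ Γ : Matrix (Fin K) (Fin K) ℝ,
        x = ∫ ω, ∑ i, (Γ *ᵥ F ω + ζ) i ^ 2 ∂P}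
      ((∑ i, ζ i ^ 2) * (1 - μv ⬝ᵥ (S⁻¹ *ᵥ μv))) ∧
    ∀ Γ : Matrix (Fin K) (Fin K) ℝ,
      (∀ i, S *ᵥ (fun j => Γ i j) = fun j => -(ζ i * μv j)) →
      (∫ ω, ∑ i, (Γ *ᵥ F ω + ζ) i ^ 2 ∂P)
        = (∑ i, ζ i ^ 2) * (1 - μv ⬝ᵥ (S⁻¹ *ᵥ μv)) := by
  have hdet : IsUnit S.det := isUnit_iff_ne_zero.2 hSpd.det_pos.ne'
  have hSS : S * S⁻¹ = 1 := Matrix.mul_nonsing_inv S hdet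
  have hSS' : S⁻¹ * S = 1 := Matrix.nonsing_inv_mul S hdet
  set u : Fin K → ℝ := S⁻¹ *ᵥ μv with hu
  have hSu : S *ᵥ u = μv := by
    rw [hu, Matrix.mulVec_mulVec, hSS, Matrix.one_mulVec]
  set m : ℝ := μv ⬝ᵥ (S⁻¹ *ᵥ μv) with hm
  -- quadratic function per row
  set q : (Fin K → ℝ) → ℝ → ℝ :=
    fun γ c => γ ⬝ᵥ (S *ᵥ γ) + 2 * c * (γ ⬝ᵥ μv) + c ^ 2 with hq
  -- key identity: q γ c = δᵀSδ + c²(1-m) with δ = γ + c•u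
  have key : ∀ (γ : Fin K → ℝ) (c : ℝ),
      q γ c = (γ + c • u) ⬝ᵥ (S *ᵥ (γ + c • u)) + c ^ 2 * (1 - m) := by
    intro γ c
    have h1 : S *ᵥ (γ + c • u) = S *ᵥ γ + c • μv := by
      rw [Matrix.mulVec_add, Matrix.mulVec_smul, hSu]
    have hST : Sᵀ = S := by
      rw [← Matrix.conjTranspose_eq_transpose_of_trivial]; exact hSpd.1
    have h2 : u ⬝ᵥ (S *ᵥ γ) = μv ⬝ᵥ γ := by
      rw [Matrix.dotProduct_mulVec, ← Matrix.mulVec_transpose, hST, hSu]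
    have h3 : u ⬝ᵥ μv = m := by rw [hm, hu, dotProduct_comm]
    rw [h1]
    simp only [add_dotProduct, smul_dotProduct, dotProduct_add,
      dotProduct_smul, h2, h3, smul_eq_mul, hq]
    have h4 : γ ⬝ᵥ μv = μv ⬝ᵥ γ := dotProduct_comm _ _
    rw [h4]; ring
  have keyLB : ∀ (γ : Fin K → ℝ) (c : ℝ), c ^ 2 * (1 - m) ≤ q γ c := by
    intro γ c
    rw [key γ c]
    have := hSpd.posSemidef.dotProduct_mulVec_nonneg (γ + c • u)
    simp only [star_trivial] at this
    linarith
  have keyEQ : ∀ (γ : Fin K → ℝ) (c : ℝ),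
      (S *ᵥ γ = fun j => -(c * μv j)) → q γ c = c ^ 2 * (1 - m) := by
    intro γ c hγ
    have hγ' : γ = -(c • u) := by
      have : S⁻¹ *ᵥ (S *ᵥ γ) = γ := by
        rw [Matrix.mulVec_mulVec, hSS', Matrix.one_mulVec]
      rw [← this, hγ]
      have : (fun j => -(c * μv j)) = -(c • μv) := by
        funext j; simp [smul_eq_mul]
      rw [this, Matrix.mulVec_neg, Matrix.mulVec_smul, hu]
    have hδ : γ + c • u = 0 := by rw [hγ']; simp
    rw [key γ c, hδ]
    simp
  -- the integral computation
  have hFint : ∀ j, Integrable (fun ω => F ω j) P :=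
    fun j => (hL2 j).integrable one_le_two
  have hFFint : ∀ j k, Integrable (fun ω => F ω j * F ω k) P :=
    fun j k => memL2_mul_integrable (hL2 j) (hL2 k)
  have hterm : ∀ (Γ : Matrix (Fin K) (Fin K) ℝ) (i : Fin K) (ω : Ω),
      (Γ *ᵥ F ω + ζ) i ^ 2 =
        (∑ j, ∑ k, Γ i j * Γ i k * (F ω j * F ω k))
          + (∑ j, 2 * ζ i * Γ i j * F ω j) + ζ i ^ 2 := by
    intro Γ i ω
    have : (Γ *ᵥ F ω + ζ) i = (∑ j, Γ i j * F ω j) + ζ i := by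
      simp [Matrix.mulVec, dotProduct]
    have e1 : (∑ j, Γ i j * F ω j) ^ 2 = ∑ j, ∑ k, Γ i j * Γ i k * (F ω j * F ω k) := by
      rw [sq, Finset.sum_mul_sum]
      exact Finset.sum_congr rfl fun j _ => Finset.sum_congr rfl fun k _ => by ring
    have e2 : 2 * (∑ j, Γ i j * F ω j) * ζ i = ∑ j, 2 * ζ i * Γ i j * F ω j := by
      rw [Finset.mul_sum, Finset.sum_mul]
      exact Finset.sum_congr rfl fun j _ => by ring
    rw [this, add_sq, e1, e2]
  have hint1 : ∀ (Γ : Matrix (Fin K) (Fin K) ℝ) (i : Fin K),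
      Integrable (fun ω => (Γ *ᵥ F ω + ζ) i ^ 2) P := by
    intro Γ i
    have : Integrable (fun ω =>
        (∑ j, ∑ k, Γ i j * Γ i k * (F ω j * F ω k))
          + (∑ j, 2 * ζ i * Γ i j * F ω j) + ζ i ^ 2) P := by
      refine Integrable.add (Integrable.add ?_ ?_) (integrable_const _)
      · exact integrable_finset_sum _ fun j _ => integrable_finset_sum _ fun k _ =>
          ((hFFint j k).const_mul _)
      · exact integrable_finset_sum _ fun j _ => by
          simpa [mul_assoc] using ((hFint j).const_mul (2 * ζ i * Γ i j))
    exact this.congr (Filter.Eventually.of_forall fun ω => (hterm Γ i ω).symm)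
  have hIntEq : ∀ Γ : Matrix (Fin K) (Fin K) ℝ,
      (∫ ω, ∑ i, (Γ *ᵥ F ω + ζ) i ^ 2 ∂P) = ∑ i, q (fun j => Γ i j) (ζ i) := by
    intro Γ
    rw [integral_finset_sum _ fun i _ => hint1 Γ i]
    refine Finset.sum_congr rfl fun i _ => ?_
    have h1 : (∫ ω, (Γ *ᵥ F ω + ζ) i ^ 2 ∂P)
        = (∫ ω, ((∑ j, ∑ k, Γ i j * Γ i k * (F ω j * F ω k))
            + (∑ j, 2 * ζ i * Γ i j * F ω j) + ζ i ^ 2) ∂P) := by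
      exact integral_congr_ae (Filter.Eventually.of_forall fun ω => hterm Γ i ω)
    rw [h1]
    have hA : Integrable (fun ω => ∑ j, ∑ k, Γ i j * Γ i k * (F ω j * F ω k)) P :=
      integrable_finset_sum _ fun j _ => integrable_finset_sum _ fun k _ =>
        ((hFFint j k).const_mul _)
    have hB : Integrable (fun ω => ∑ j, 2 * ζ i * Γ i j * F ω j) P :=
      integrable_finset_sum _ fun j _ => by
        simpa [mul_assoc] using ((hFint j).const_mul (2 * ζ i * Γ i j))
    have hAB : Integrable (fun ω => (∑ j, ∑ k, Γ i j * Γ i k * (F ω j * F ω k))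
        + (∑ j, 2 * ζ i * Γ i j * F ω j)) P := hA.add hB
    rw [integral_add hAB (integrable_const _), integral_add hA hB,
      integral_const]
    simp only [measure_univ, probReal_univ, ENNReal.toReal_one, smul_eq_mul, one_mul]
    have hAval : (∫ ω, ∑ j, ∑ k, Γ i j * Γ i k * (F ω j * F ω k) ∂P)
        = (fun j => Γ i j) ⬝ᵥ (S *ᵥ fun j => Γ i j) := by
      rw [integral_finset_sum _ fun j _ => integrable_finset_sum _ fun k _ =>
        ((hFFint j k).const_mul _)]
      simp only [dotProduct, Matrix.mulVec]
      refine Finset.sum_congr rfl fun j _ => ?_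
      rw [integral_finset_sum _ fun k _ => ((hFFint j k).const_mul _), Finset.mul_sum]
      refine Finset.sum_congr rfl fun k _ => ?_
      rw [integral_const_mul, ← hS j k]; ring
    have hBval : (∫ ω, ∑ j, 2 * ζ i * Γ i j * F ω j ∂P)
        = 2 * ζ i * ((fun j => Γ i j) ⬝ᵥ μv) := by
      rw [integral_finset_sum _ fun j _ => by
        simpa [mul_assoc] using ((hFint j).const_mul (2 * ζ i * Γ i j))]
      simp only [dotProduct, Finset.mul_sum]
      refine Finset.sum_congr rfl fun j _ => ?_
      rw [show (fun ω => 2 * ζ i * Γ i j * F ω j) = fun ω => (2 * ζ i * Γ i j) * F ω j from rfl,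
        integral_const_mul, ← hμ j]; ring
    rw [hAval, hBval, hq]
  have hsum : (∑ i, ζ i ^ 2 * (1 - m)) = (∑ i, ζ i ^ 2) * (1 - m) :=
    (Finset.sum_mul _ _ _).symm
  -- the optimal matrix
  set Γ₀ : Matrix (Fin K) (Fin K) ℝ := Matrix.of fun i j => -(ζ i * u j) with hΓ₀
  have hΓ₀row : ∀ i, S *ᵥ (fun j => Γ₀ i j) = fun j => -(ζ i * μv j) := by
    intro i
    have : (fun j => Γ₀ i j) = -(ζ i • u) := by
      funext j; simp [hΓ₀, smul_eq_mul]
    rw [this, Matrix.mulVec_neg, Matrix.mulVec_smul, hSu]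
    funext j; simp [smul_eq_mul]
  have hval : ∀ Γ : Matrix (Fin K) (Fin K) ℝ,
      (∀ i, S *ᵥ (fun j => Γ i j) = fun j => -(ζ i * μv j)) →
      (∫ ω, ∑ i, (Γ *ᵥ F ω + ζ) i ^ 2 ∂P) = (∑ i, ζ i ^ 2) * (1 - m) := by
    intro Γ hΓ
    rw [hIntEq Γ, ← hsum]
    exact Finset.sum_congr rfl fun i _ => keyEQ _ _ (hΓ i)
  refine ⟨⟨⟨Γ₀, (hval Γ₀ hΓ₀row).symm⟩, ?_⟩, hval⟩
  rintro x ⟨Γ, rfl⟩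
  rw [hIntEq Γ, ← hsum]
  exact Finset.sum_le_sum fun i _ => keyLB _ _
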